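/- Assume (D+). Let M > 0 and let V : [0,∞) → ℝ be continuous with 0 ≤ V(t) ≤ M for all t. Extend d to ℝ by setting d(x) := d(0) for x < 0, and for z ∈ ℝ let X(·,z) solve ∂X/∂t(t,z) = V(t) − d(X(t,z)), X(0,z) = z. Let u₀ : [0,∞) → [0,∞) be integrable and let u : [0,∞) × [0,∞) → [0,∞) be such that for every t ≥ 0 and every nonnegative measurable ψ : [0,∞) → ℝ one has ∫₀^∞ ψ(x) u(t,x) dx = ∫₀^∞ ψ(X(t,z)) 𝟙_{X(t,z) ≥ 0} u₀(z) dz (push-forward of u₀ along the characteristics). If θ > 0 and ∫₀^∞ z^θ u₀(z) dz < ∞, then for every t ≥ 0: ∫₀^∞ x^θ u(t,x) dx ≤ ∫₀^∞ (z + M/α)^θ u₀(z) dz. -/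

import Mathlib

open Set Filter Topology MeasureTheory

/-- Assumption (D+): `d : [0,∞) → [0,∞)` is C¹ with `0 < α ≤ d'(x) ≤ β` for all `x ≥ 0`. -/
structure DPlus (d d' : ℝ → ℝ) (α β : ℝ) : Prop where
  nonneg : ∀ x ∈ Set.Ici (0:ℝ), 0 ≤ d x
  hasDeriv : ∀ x ∈ Set.Ici (0:ℝ), HasDerivWithinAt d (d' x) (Set.Ici 0) x
  contDeriv : ContinuousOn d' (Set.Ici 0)
  alpha_pos : 0 < α
  deriv_lb : ∀ x ∈ Set.Ici (0:ℝ), α ≤ d' x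
  deriv_ub : ∀ x ∈ Set.Ici (0:ℝ), d' x ≤ β

/-- Lemma 2.1, item 2: propagation of moments: under (D+) (with `d`
extended to `ℝ` by `d(x) = d(0)` for `x < 0`), let `0 ≤ V ≤ M` be continuous, let
`X(·,z)` solve `∂X/∂t = V(t) − d(X)`, `X(0,z) = z`, and let `u` be the push-forward of
`u₀` along the characteristics, i.e. for every `t ≥ 0` and nonnegative measurable `ψ`,
`∫₀^∞ ψ(x) u(t,x) dx = ∫₀^∞ ψ(X(t,z)) 𝟙_{X(t,z) ≥ 0} u₀(z) dz`.
If `θ > 0` and `∫₀^∞ z^θ u₀(z) dz < ∞`, then for every `t ≥ 0`,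
`∫₀^∞ x^θ u(t,x) dx ≤ ∫₀^∞ (z + M/α)^θ u₀(z) dz`. -/
theorem moment_propagation
    (d d' : ℝ → ℝ) (α β : ℝ) (hD : DPlus d d' α β)
    (hd_ext : ∀ x : ℝ, x < 0 → d x = d 0)
    (M : ℝ) (hM : 0 < M)
    (V : ℝ → ℝ) (hVc : ContinuousOn V (Ici 0))
    (hV : ∀ t ∈ Ici (0:ℝ), 0 ≤ V t ∧ V t ≤ M)
    (X : ℝ → ℝ → ℝ)
    (hX0 : ∀ z : ℝ, X 0 z = z)
    (hXode : ∀ z : ℝ, ∀ t ∈ Ici (0:ℝ),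
      HasDerivWithinAt (fun s => X s z) (V t - d (X t z)) (Ici 0) t)
    (u₀ : ℝ → ℝ) (hu₀_nonneg : ∀ z : ℝ, 0 ≤ u₀ z)
    (hu₀_int : IntegrableOn u₀ (Ioi 0))
    (u : ℝ → ℝ → ℝ) (hu_nonneg : ∀ t ∈ Ici (0:ℝ), ∀ x ∈ Ici (0:ℝ), 0 ≤ u t x)
    (hpush : ∀ t ∈ Ici (0:ℝ), ∀ ψ : ℝ → ENNReal, Measurable ψ →
      (∫⁻ x in Ioi (0:ℝ), ψ x * ENNReal.ofReal (u t x)) =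
        ∫⁻ z in Ioi (0:ℝ), (if 0 ≤ X t z then ψ (X t z) else 0) * ENNReal.ofReal (u₀ z))
    (θ : ℝ) (hθ : 0 < θ)
    (hmom : (∫⁻ z in Ioi (0:ℝ), ENNReal.ofReal (z ^ θ * u₀ z)) < ⊤) :
    ∀ t ∈ Ici (0:ℝ),
      (∫⁻ x in Ioi (0:ℝ), ENNReal.ofReal (x ^ θ * u t x)) ≤
        ∫⁻ z in Ioi (0:ℝ), ENNReal.ofReal ((z + M / α) ^ θ * u₀ z) := by

  intro t ht
  have hα := hD.alpha_pos
  -- d grows at least linearly: d y ≥ α * y for y ≥ 0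
  have hd_lin : ∀ y : ℝ, 0 ≤ y → α * y ≤ d y := by
    intro y hy
    have hdc : ContinuousOn d (Ici 0) := fun x hx => (hD.hasDeriv x hx).continuousWithinAt
    have hderiv : ∀ x ∈ interior (Ici (0:ℝ)), HasDerivAt d (d' x) x := by
      intro x hx
      rw [interior_Ici] at hx
      exact (hD.hasDeriv x (Set.mem_Ici.mpr (le_of_lt hx))).hasDerivAt (Ici_mem_nhds hx)
    have hge : ∀ x ∈ interior (Ici (0:ℝ)), α ≤ deriv d x := by
      intro x hx
      rw [(hderiv x hx).deriv]
      rw [interior_Ici] at hx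
      exact hD.deriv_lb x (Set.mem_Ici.mpr (le_of_lt hx))
    have := (convex_Ici (0:ℝ)).mul_sub_le_image_sub_of_le_deriv hdc
      (fun x hx => (hderiv x hx).differentiableAt.differentiableWithinAt) hge
      0 self_mem_Ici y hy hy
    have h0 := hD.nonneg 0 self_mem_Ici
    simp only [sub_zero] at this
    linarith
  -- Key bound on characteristics: for z > 0, X t z ≤ z + M / α
  have hXbound : ∀ z : ℝ, 0 < z → X t z ≤ z + M / α := by
    intro z hz
    have hcont : ContinuousOn (fun s => X s z) (Icc 0 t) := by
      intro s hs
      exact ((hXode z s hs.1).continuousWithinAt).mono (fun x hx => hx.1)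
    have hle : ∀ ⦃s⦄, s ∈ Icc (0:ℝ) t → X s z ≤ z + M / α := by
      refine image_le_of_deriv_right_lt_deriv_boundary (f' := fun s => V s - d (X s z))
        hcont (fun s hs => (hXode z s hs.1).mono (fun x hx => le_trans hs.1 hx))
        ?_ (B' := fun _ => 0) (fun x => hasDerivAt_const x _) ?_
      · rw [hX0]
        have : 0 < M / α := div_pos hM hα
        linarith
      · intro s hs hXs
        have hVs := hV s (hs.1)
        have hXnn : (0:ℝ) ≤ X s z := by
          rw [hXs]; positivity
        have hd_ge : α * X s z ≤ d (X s z) := hd_lin _ hXnn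
        have heq : α * (z + M / α) = α * z + M := by
          field_simp
        rw [hXs] at hd_ge
        show V s - d (X s z) < 0
        rw [hXs]
        nlinarith [mul_pos hα hz]
    exact hle ⟨ht, le_refl t⟩
  -- Use the push-forward identity with ψ x = ofReal (x ^ θ)
  have hψ : Measurable (fun x : ℝ => ENNReal.ofReal (x ^ θ)) :=
    ENNReal.measurable_ofReal.comp (Real.continuous_rpow_const hθ.le).measurable
  have hkey := hpush t ht (fun x => ENNReal.ofReal (x ^ θ)) hψ
  have hLHS : (∫⁻ x in Ioi (0:ℝ), ENNReal.ofReal (x ^ θ * u t x)) =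
      ∫⁻ x in Ioi (0:ℝ), ENNReal.ofReal (x ^ θ) * ENNReal.ofReal (u t x) := by
    refine setLIntegral_congr_fun measurableSet_Ioi ?_
    intro x hx
    exact ENNReal.ofReal_mul (Real.rpow_nonneg (le_of_lt hx) θ)
  rw [hLHS, hkey]
  refine lintegral_mono_ae ((ae_restrict_iff' measurableSet_Ioi).2
    (Filter.Eventually.of_forall ?_))
  intro z hz
  by_cases hXz : 0 ≤ X t z
  · simp only [if_pos hXz]
    have h1 : (X t z) ^ θ ≤ (z + M / α) ^ θ :=
      Real.rpow_le_rpow hXz (hXbound z hz) (le_of_lt hθ)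
    calc ENNReal.ofReal ((X t z) ^ θ) * ENNReal.ofReal (u₀ z)
        ≤ ENNReal.ofReal ((z + M / α) ^ θ) * ENNReal.ofReal (u₀ z) := by
          exact mul_le_mul_left (ENNReal.ofReal_le_ofReal h1) _
      _ = ENNReal.ofReal ((z + M / α) ^ θ * u₀ z) := by
          rw [ENNReal.ofReal_mul (Real.rpow_nonneg
            (add_nonneg (le_of_lt hz) (le_of_lt (div_pos hM hα))) θ)]
  · simp [if_neg hXz]
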